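/- Let λ₁,…,λₙ, μ₁,…,μₙ be scalars in a field with all μᵢ nonzero, λᵢ ≠ λ_{i+1} for 1 ≤ i ≤ n−1, and λₙ ≠ λ₁. With P = diag(λᵢ), Q = I, and R the cyclic shift matrix weighted by μᵢ (R_{i,i+1} = μᵢ, R_{n,1} = μₙ), the 3n×3n block matrix [[0,P,Q],[-P,0,R],[-Q,-R,0]] has rank 3n (i.e., is invertible). -/

import Mathlib

open Matrix

/-- The 3×3 block matrix with n×n blocks. -/
def block3 {n : ℕ} {R : Type*} [CommRing R]
    (A B C D E F G H I : Matrix (Fin n) (Fin n) R) :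
    Matrix (Fin 3 × Fin n) (Fin 3 × Fin n) R :=
  fun p q => ![![A, B, C], ![D, E, F], ![G, H, I]] p.1 q.1 p.2 q.2

/-- With P = diag(λ), Q = 1, R the cyclic shift weighted by μ, and the genericity conditions
(all μᵢ ≠ 0, λᵢ ≠ λ_{i+1} cyclically), the 3n×3n block matrix
[[0,P,Q],[-P,0,R],[-Q,-R,0]] is invertible, i.e. has rank 3n. -/
theorem block3_generic_invertible {n : ℕ} [NeZero n] {K : Type*} [Field K]
    (lam mu : Fin n → K)
    (hmu : ∀ i, mu i ≠ 0) (hlam : ∀ i, lam i ≠ lam (i + 1))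
    (P Q R : Matrix (Fin n) (Fin n) K)
    (hP : P = Matrix.diagonal lam)
    (hQ : Q = 1)
    (hR : R = Matrix.of fun i j => if j = i + 1 then mu i else 0) :
    IsUnit (block3 0 P Q (-P) 0 R (-Q) (-R) 0) := by
  subst hP hQ hR
  rw [Matrix.isUnit_iff_isUnit_det, isUnit_iff_ne_zero]
  intro hdet
  obtain ⟨v, hv, hmv⟩ := (Matrix.exists_mulVec_eq_zero_iff).mpr hdet
  have key : ∀ b i, (block3 0 (Matrix.diagonal lam) 1 (-(Matrix.diagonal lam)) 0
      (Matrix.of fun i j => if j = i + 1 then mu i else 0) (-(1:Matrix (Fin n) (Fin n) K))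
      (-(Matrix.of fun i j => if j = i + 1 then mu i else 0)) 0).mulVec v (b, i) = 0 :=
    fun b i => congrFun hmv (b, i)
  have h0 : ∀ i, lam i * v (1, i) + v (2, i) = 0 := by
    intro i
    have := key 0 i
    simpa [Matrix.mulVec, dotProduct, block3, Fintype.sum_prod_type,
      Fin.sum_univ_three, Matrix.diagonal, Matrix.one_apply, ite_mul,
      Finset.sum_ite_eq, Finset.sum_ite_eq'] using this
  have h1 : ∀ i, -(lam i * v (0, i)) + mu i * v (2, i + 1) = 0 := by
    intro i
    have := key 1 i
    simpa [Matrix.mulVec, dotProduct, block3, Fintype.sum_prod_type,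
      Fin.sum_univ_three, Matrix.diagonal, Matrix.one_apply, ite_mul,
      Finset.sum_ite_eq, Finset.sum_ite_eq'] using this
  have h2 : ∀ i, -(v (0, i)) + -(mu i * v (1, i + 1)) = 0 := by
    intro i
    have := key 2 i
    simpa [Matrix.mulVec, dotProduct, block3, Fintype.sum_prod_type,
      Fin.sum_univ_three, Matrix.diagonal, Matrix.one_apply, ite_mul,
      Finset.sum_ite_eq, Finset.sum_ite_eq'] using this
  have hy : ∀ j, v (1, j) = 0 := by
    intro j
    have hij : (j - 1) + 1 = j := by rw [sub_add_cancel]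
    have e2 := h2 (j - 1)
    have e1 := h1 (j - 1)
    have e0 := h0 j
    rw [hij] at e2 e1
    have hx : v (0, j - 1) = -(mu (j-1) * v (1, j)) := by linear_combination -e2
    have hz : v (2, j) = -(lam j * v (1, j)) := by linear_combination e0
    rw [hx, hz] at e1
    have : mu (j-1) * ((lam j - lam (j-1)) * v (1, j)) = 0 := by linear_combination -e1
    rcases mul_eq_zero.mp this with h | h
    · exact absurd h (hmu _)
    rcases mul_eq_zero.mp h with h | h
    · exact absurd (sub_eq_zero.mp h).symm (by simpa [hij] using hlam (j - 1))
    · exact h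
  have hz : ∀ j, v (2, j) = 0 := fun j => by have := h0 j; rw [hy j] at this; simpa using this
  have hx : ∀ j, v (0, j) = 0 := fun j => by have := h2 j; rw [hy (j+1)] at this; simpa using this
  apply hv
  funext p
  obtain ⟨b, i⟩ := p
  fin_cases b
  · exact hx i
  · exact hy i
  · exact hz i
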